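/- For k ≥ 1 and any pair (p, q) with (p, q) ≠ (k, k), the tropical cohomology with compact support H_c^{p,q}(T^k) of the tropical affine space T^k vanishes, and H_c^{k,k}(T^k) ≅ ℤ. -/

import Mathlib

open scoped DirectSum

namespace TropAffine

variable (k : ℕ)

/-- The faces of the cell structure `{𝕋, {∞}}^k` of tropical affine space `𝕋^k`:
a face of dimension `q` is a product of `𝕋`'s (on the complement of `U`) and
`{∞}`'s (on `U`), encoded by the set `U ⊆ [k]` with `|U| = k - q`. -/
def Idx (q : ℕ) := {U : Finset (Fin k) // U.card + q = k}

instance (q : ℕ) : Fintype (Idx k q) := by unfold Idx; infer_instance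
instance (q : ℕ) : DecidableEq (Idx k q) := by unfold Idx; infer_instance

/-- The tangent lattice of the face indexed by `U`: `ℤ^{[k] ∖ U}`. -/
abbrev Latt (U : Finset (Fin k)) := {i : Fin k // i ∉ U} → ℤ

/-- The projection of tangent lattices attached to an inclusion `U ⊆ U'`. -/
noncomputable def projL {U U' : Finset (Fin k)} (h : U ⊆ U') :
    Latt k U →ₗ[ℤ] Latt k U' :=
  LinearMap.funLeft ℤ ℤ (fun i : {i : Fin k // i ∉ U'} => ⟨i.1, fun hc => i.2 (h hc)⟩)

/-- The multi-tangent coefficient of the face indexed by `U`: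
`F_p = ⋀^p ℤ^{[k]∖U}` (each face of `𝕋^k` is contained only in faces of the same
sedentarity, so the sum defining `F_p` has a single term). -/
abbrev Fp (p : ℕ) (U : Finset (Fin k)) := ↥(⋀[ℤ]^p (Latt k U))

/-- The chain group predual to `C_c^{p,q}(𝕋^k)`. -/
abbrev Mch (p q : ℕ) := ⨁ U : Idx k q, Fp k p U.1

end TropAffine

/-- Sign and component-map data for the cellular complex of `𝕋^k` computing tropical
cohomology with compact support: incidence signs coming from a cellular orientation,
and the maps `⋀^p ℤ^{[k]∖U} → ⋀^p ℤ^{[k]∖U'}` induced by the coordinate projections. -/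
structure CubeData (k p : ℕ) where
  ε : ∀ q : ℕ, TropAffine.Idx k q → TropAffine.Idx k (q + 1) → ℤ
  ε_unit : ∀ q γ δ, δ.1 ⊆ γ.1 → ε q γ δ = 1 ∨ ε q γ δ = -1
  ε_zero : ∀ q γ δ, ¬ δ.1 ⊆ γ.1 → ε q γ δ = 0
  ε_rel : ∀ (q : ℕ) (γ : TropAffine.Idx k q) (δ : TropAffine.Idx k (q + 2)),
      (∑ μ : TropAffine.Idx k (q + 1), ε q γ μ * ε (q + 1) μ δ) = 0
  imap : ∀ {q : ℕ} (γ : TropAffine.Idx k q) (δ : TropAffine.Idx k (q + 1)),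
      δ.1 ⊆ γ.1 → (TropAffine.Fp k p δ.1 →ₗ[ℤ] TropAffine.Fp k p γ.1)
  imap_spec : ∀ {q : ℕ} (γ : TropAffine.Idx k q) (δ : TropAffine.Idx k (q + 1))
      (h : δ.1 ⊆ γ.1) (x : TropAffine.Fp k p δ.1),
      (imap γ δ h x : ExteriorAlgebra ℤ (TropAffine.Latt k γ.1)) =
        ExteriorAlgebra.map (TropAffine.projL k h)
          (x : ExteriorAlgebra ℤ (TropAffine.Latt k δ.1))

namespace TropAffine

variable {k : ℕ}

/-- The predual boundary map. -/
noncomputable def bdry {p : ℕ} (cd : CubeData k p) (q : ℕ) :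
    Mch k p (q + 1) →ₗ[ℤ] Mch k p q :=
  DirectSum.toModule ℤ _ _ fun δ =>
    ∑ γ : Idx k q,
      if h : δ.1 ⊆ γ.1 then
        cd.ε q γ δ •
          ((DirectSum.lof ℤ (Idx k q) (fun γ' => Fp k p γ'.1) γ).comp (cd.imap γ δ h))
      else 0

/-- The cochain groups `C_c^{p,q}(𝕋^k)`. -/
abbrev Cc (p q : ℕ) := Module.Dual ℤ (Mch k p q)

/-- The coboundary of the compactly supported complex. -/
noncomputable def coder {p : ℕ} (cd : CubeData k p) (q : ℕ) :
    Cc (k := k) p q →ₗ[ℤ] Cc (k := k) p (q + 1) :=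
  (bdry cd q).dualMap

/-- The coboundary arriving in degree `q`. -/
noncomputable def coderFrom {p : ℕ} (cd : CubeData k p) :
    ∀ q : ℕ, Cc (k := k) p (q - 1) →ₗ[ℤ] Cc (k := k) p q
  | 0 => 0
  | (q + 1) => coder cd q

/-- Tropical cohomology with compact support `H_c^{p,q}(𝕋^k)`. -/
noncomputable def Hc {p : ℕ} (cd : CubeData k p) (q : ℕ) :=
  ↥(LinearMap.ker (coder cd q)) ⧸
    Submodule.comap (LinearMap.ker (coder cd q)).subtype
      (LinearMap.range (coderFrom cd q))

noncomputable instance {p : ℕ} (cd : CubeData k p) (q : ℕ) : AddCommGroup (Hc cd q) := by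
  unfold Hc; infer_instance

noncomputable instance {p : ℕ} (cd : CubeData k p) (q : ℕ) : Module ℤ (Hc cd q) := by
  unfold Hc; infer_instance

end TropAffine
namespace TropAux
open TropAffine ExteriorAlgebra

variable {k : ℕ}

/-- index type of `p`-subsets of `Fin k`. -/
abbrev PIdx (k p : ℕ) := {T : Finset (Fin k) // T.card = p}

/-- "basis vector" of `Latt k U` attached to `i : Fin k`; it is `0` when `i ∈ U`. -/
def bv (U : Finset (Fin k)) (i : Fin k) : Latt k U := fun j => if j.1 = i then 1 else 0

lemma bv_eq_zero {U : Finset (Fin k)} {i : Fin k} (h : i ∈ U) : bv U i = 0 := by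
  funext j
  have : j.1 ≠ i := fun hji => j.2 (hji ▸ h)
  simp [bv, this]

lemma bv_eq_single {U : Finset (Fin k)} (j : {i : Fin k // i ∉ U}) :
    bv U j.1 = Pi.single j (1 : ℤ) := by
  funext j'
  simp only [bv, Pi.single_apply]
  by_cases h : j' = j
  · subst h; simp
  · have : j'.1 ≠ j.1 := fun hv => h (Subtype.ext hv)
    simp [h, this]

lemma projL_bv {U U' : Finset (Fin k)} (h : U ⊆ U') (i : Fin k) :
    projL k h (bv U i) = bv U' i := rfl

variable {p : ℕ}

/-- enumeration of a `p`-subset in increasing order. -/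
def en (T : PIdx k p) (a : Fin p) : Fin k := (T.1.orderIsoOfFin T.2 a).1

lemma en_mem (T : PIdx k p) (a : Fin p) : en T a ∈ T.1 := (T.1.orderIsoOfFin T.2 a).2

lemma en_inj (T : PIdx k p) : Function.Injective (en T) := fun a b hab => by
  have := (T.1.orderIsoOfFin T.2).injective (Subtype.ext hab)
  exact this

lemma en_surj (T : PIdx k p) {i : Fin k} (hi : i ∈ T.1) : ∃ a, en T a = i :=
  ⟨(T.1.orderIsoOfFin T.2).symm ⟨i, hi⟩, by
    simp [en]⟩

/-- the family of basis vectors indexed by a `p`-subset `T`. -/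
def fam (U : Finset (Fin k)) (T : PIdx k p) : Fin p → Latt k U := fun a => bv U (en T a)

/-- the wedge `e_T` in the exterior algebra. -/
noncomputable def eTA (U : Finset (Fin k)) (T : PIdx k p) : ExteriorAlgebra ℤ (Latt k U) :=
  ιMulti ℤ p (fam U T)

lemma eTA_mem (U : Finset (Fin k)) (T : PIdx k p) : eTA U T ∈ ⋀[ℤ]^p (Latt k U) :=
  ExteriorAlgebra.ιMulti_range ℤ p (Set.mem_range_self _)

/-- the wedge `e_T` as an element of the exterior power. -/
noncomputable def eT (U : Finset (Fin k)) (T : PIdx k p) : Fp k p U := ⟨eTA U T, eTA_mem U T⟩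

lemma eT_eq_zero {U : Finset (Fin k)} {T : PIdx k p} {i : Fin k} (hiT : i ∈ T.1) (hiU : i ∈ U) :
    eT U T = 0 := by
  ext
  obtain ⟨a, ha⟩ := en_surj T hiT
  have hz : fam U T a = 0 := by rw [fam, ha]; exact bv_eq_zero hiU
  simpa [eT, eTA] using (ιMulti ℤ p (M := Latt k U)).map_coord_zero a hz

/-- coordinate functional on `Latt k U` attached to `i : Fin k` (zero if `i ∈ U`). -/
noncomputable def coord (U : Finset (Fin k)) (i : Fin k) : Latt k U →ₗ[ℤ] ℤ :=
  if h : i ∈ U then 0 else LinearMap.proj (⟨i, h⟩ : {j : Fin k // j ∉ U})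

lemma coord_bv (U : Finset (Fin k)) (i j : Fin k) :
    coord U i (bv U j) = if i ∉ U ∧ i = j then 1 else 0 := by
  rcases Classical.em (i ∈ U) with h | h
  · simp [coord, h]
  · simp only [coord, dif_neg h, LinearMap.proj_apply, bv]
    simp [h]

/-- the alternating form computing the `T`-minor. -/
noncomputable def dT (U : Finset (Fin k)) (T : PIdx k p) : (Latt k U) [⋀^Fin p]→ₗ[ℤ] ℤ :=
  (Matrix.detRowAlternating).compLinearMap (LinearMap.pi fun a => coord U (en T a))

lemma dT_apply (U : Finset (Fin k)) (T : PIdx k p) (v : Fin p → Latt k U) :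
    dT U T v = Matrix.det (Matrix.of fun a b => coord U (en T b) (v a)) := rfl

lemma altsum_apply {M N : Type*} [AddCommMonoid M] [Module ℤ M] [AddCommGroup N] [Module ℤ N]
    {α : Type*} (s : Finset α) (f : α → (M [⋀^Fin p]→ₗ[ℤ] N)) (v : Fin p → M) :
    (∑ a ∈ s, f a) v = ∑ a ∈ s, f a v := by
  classical
  induction s using Finset.induction_on with
  | empty => simp
  | insert a s' h ih => rw [Finset.sum_insert h, Finset.sum_insert h,
      AlternatingMap.add_apply, ih]

end TropAux
namespace TropAux
open TropAffine ExteriorAlgebra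

variable {k p : ℕ}

lemma dT_fam (U : Finset (Fin k)) (S T : PIdx k p) :
    dT U T (fam U S) = if S = T ∧ ∀ i ∈ S.1, i ∉ U then 1 else 0 := by
  rw [dT_apply]
  by_cases hST : S = T
  · subst hST
    by_cases hd : ∀ i ∈ S.1, i ∉ U
    · simp only [hd, and_true, if_pos rfl]
      have : (Matrix.of fun a b => coord U (en S b) (fam U S a)) = 1 := by
        ext a b
        rw [Matrix.of_apply, fam, coord_bv, Matrix.one_apply]
        have h1 : en S b ∉ U := hd _ (en_mem S b)
        by_cases hab : a = b
        · subst hab; simp [h1]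
        · have : en S b ≠ en S a := fun h => hab ((en_inj S h).symm)
          simp [hab, this, h1]
      rw [this, Matrix.det_one, if_pos ⟨trivial, hd⟩]
    · simp only [hd, and_false, if_false]
      push_neg at hd
      obtain ⟨i, hiS, hiU⟩ := hd
      obtain ⟨a, ha⟩ := en_surj S hiS
      apply Matrix.det_eq_zero_of_row_eq_zero a
      intro b
      rw [Matrix.of_apply, fam, ha, bv_eq_zero hiU, map_zero]
  · simp only [hST, false_and, if_false]
    -- there is an element of S not in T
    have hsub : ¬ S.1 ⊆ T.1 := by
      intro hsub
      exact hST (Subtype.ext (Finset.eq_of_subset_of_card_le hsub (by rw [S.2, T.2])))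
    obtain ⟨i, hiS, hiT⟩ := Finset.not_subset.1 hsub
    obtain ⟨a, ha⟩ := en_surj S hiS
    apply Matrix.det_eq_zero_of_row_eq_zero a
    intro b
    rw [Matrix.of_apply, fam, ha, coord_bv]
    have : en T b ≠ i := fun h => hiT (h ▸ en_mem T b)
    simp [this]

/-- the determinant expansion of a wedge of vectors over the standard wedges `e_T`,
as an equality of alternating maps. -/
lemma expansionAlt (U : Finset (Fin k)) :
    (ιMulti ℤ p : (Latt k U) [⋀^Fin p]→ₗ[ℤ] ExteriorAlgebra ℤ (Latt k U)) =
      ∑ T : PIdx k p, (LinearMap.toSpanSingleton ℤ _ (eTA U T)).compAlternatingMap (dT U T) := by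
  classical
  apply Module.Basis.ext_alternating (Pi.basisFun ℤ {i : Fin k // i ∉ U})
  intro w hw
  have hbv : ∀ a, (Pi.basisFun ℤ {i : Fin k // i ∉ U}) (w a) = bv U (w a).1 := fun a => by
    rw [Pi.basisFun_apply, bv_eq_single]
  simp only [hbv]
  -- the image subset
  have hjinj : Function.Injective (fun a => (w a).1) := fun a b hab =>
    hw (Subtype.ext hab)
  set T₀ : PIdx k p := ⟨Finset.image (fun a => (w a).1) Finset.univ, by
    rw [Finset.card_image_of_injective _ hjinj, Finset.card_univ, Fintype.card_fin]⟩ with hT₀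
  -- the permutation σ with en T₀ (σ a) = (w a).1
  have hmem : ∀ a, (w a).1 ∈ T₀.1 := fun a => Finset.mem_image_of_mem _ (Finset.mem_univ a)
  let u : Fin p → {x // x ∈ T₀.1} := fun a => ⟨(w a).1, hmem a⟩
  have hu : Function.Bijective u := by
    refine (Fintype.bijective_iff_injective_and_card u).2 ⟨?_, ?_⟩
    · intro a b hab
      have hval : (u a).1 = (u b).1 := congrArg Subtype.val hab
      exact hjinj hval
    · rw [Fintype.card_fin, Fintype.card_coe, T₀.2]
  let σ : Equiv.Perm (Fin p) :=
    (Equiv.ofBijective u hu).trans (T₀.1.orderIsoOfFin T₀.2).toEquiv.symm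
  have hσ : ∀ a, en T₀ (σ a) = (w a).1 := fun a => by
    simp only [σ, en, Equiv.trans_apply]
    rw [show ((T₀.1.orderIsoOfFin T₀.2) ((T₀.1.orderIsoOfFin T₀.2).toEquiv.symm
      ((Equiv.ofBijective u hu) a))) = (Equiv.ofBijective u hu) a from
      (T₀.1.orderIsoOfFin T₀.2).toEquiv.apply_symm_apply _]
    rfl
  -- LHS = sign σ • eTA T₀
  have hfam : (fun a => bv U (w a).1) = fam U T₀ ∘ σ := by
    funext a
    simp only [Function.comp_apply, fam, hσ]
  have hLHS : ιMulti ℤ p (fun a => bv U (w a).1) = Equiv.Perm.sign σ • eTA U T₀ := by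
    rw [hfam, eTA, AlternatingMap.map_perm]
  -- RHS: only T₀ term survives
  rw [altsum_apply, hLHS]
  rw [Finset.sum_eq_single T₀]
  · rw [LinearMap.compAlternatingMap_apply]
    have : dT U T₀ (fun a => bv U (w a).1) = (Equiv.Perm.sign σ : ℤ) := by
      rw [dT_apply]
      have hM : (Matrix.of fun a b => coord U (en T₀ b) (bv U (w a).1)) =
          Equiv.Perm.permMatrix ℤ σ := by
        ext a b
        rw [Matrix.of_apply, coord_bv]
        have h1 : en T₀ b ∉ U := by
          have := en_mem T₀ b
          rw [hT₀] at this
          simp only [Finset.mem_image] at this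
          obtain ⟨c, _, hc⟩ := this
          rw [← hc]; exact (w c).2
        have h2 : (en T₀ b = (w a).1) ↔ σ a = b := by
          rw [← hσ a]
          exact ⟨fun h => ((en_inj T₀) h).symm, fun h => by rw [h]⟩
        rw [Equiv.Perm.permMatrix, PEquiv.toMatrix_apply, Equiv.toPEquiv_apply]
        simp only [h1, not_false_iff, true_and]
        rw [if_congr h2 rfl rfl]
        congr 1
        simp [Option.mem_def, eq_comm]
      rw [hM, Matrix.det_permutation]
      simp
    rw [this, LinearMap.toSpanSingleton_apply]
    rcases Int.units_eq_one_or (Equiv.Perm.sign σ) with h | h <;> rw [h] <;> simp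
  · intro T _ hT
    rw [LinearMap.compAlternatingMap_apply]
    have : dT U T (fun a => bv U (w a).1) = 0 := by
      rw [dT_apply]
      have hsub : ¬ T₀.1 ⊆ T.1 := by
        intro hsub
        exact hT (Subtype.ext (Finset.eq_of_subset_of_card_le hsub (by rw [T₀.2, T.2])).symm)
      obtain ⟨i, hiT₀, hiT⟩ := Finset.not_subset.1 hsub
      rw [hT₀] at hiT₀
      simp only [Finset.mem_image, Finset.mem_univ, true_and] at hiT₀
      obtain ⟨a, ha⟩ := hiT₀
      apply Matrix.det_eq_zero_of_row_eq_zero a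
      intro b
      rw [Matrix.of_apply, coord_bv, ha]
      have : en T b ≠ i := fun h => hiT (h ▸ en_mem T b)
      simp [this]
    rw [this, LinearMap.toSpanSingleton_apply, zero_smul]
  · intro h; exact absurd (Finset.mem_univ T₀) h

lemma expansion (U : Finset (Fin k)) (v : Fin p → Latt k U) :
    ιMulti ℤ p v = ∑ T : PIdx k p, dT U T v • eTA U T := by
  conv_lhs => rw [show (ιMulti ℤ p v : ExteriorAlgebra ℤ (Latt k U)) =
    (∑ T : PIdx k p, (LinearMap.toSpanSingleton ℤ _ (eTA U T)).compAlternatingMap (dT U T)) v from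
    by rw [← expansionAlt]]
  rw [altsum_apply]
  simp [LinearMap.toSpanSingleton_apply]

end TropAux
namespace TropAux
open TropAffine ExteriorAlgebra

variable {k p : ℕ}

lemma exterior_le_span (U : Finset (Fin k)) :
    ⋀[ℤ]^p (Latt k U) ≤ Submodule.span ℤ (Set.range (eTA U : PIdx k p → _)) := by
  rw [← ιMulti_span_fixedDegree]
  refine Submodule.span_le.2 ?_
  rintro _ ⟨v, rfl⟩
  rw [expansion]
  exact Submodule.sum_mem _ fun T _ =>
    Submodule.smul_mem _ _ (Submodule.subset_span ⟨T, rfl⟩)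

lemma eT_span (U : Finset (Fin k)) :
    Submodule.span ℤ (Set.range (eT U : PIdx k p → Fp k p U)) = ⊤ := by
  rw [eq_top_iff]
  rintro x -
  have hx : (x : ExteriorAlgebra ℤ (Latt k U)) ∈
      Submodule.map (⋀[ℤ]^p (Latt k U)).subtype
        (Submodule.span ℤ (Set.range (eT U : PIdx k p → Fp k p U))) := by
    rw [Submodule.map_span]
    have himg : (⋀[ℤ]^p (Latt k U)).subtype '' Set.range (eT U : PIdx k p → Fp k p U) =
        Set.range (eTA U : PIdx k p → _) := by
      rw [← Set.range_comp]
      rfl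
    rw [himg]
    exact exterior_le_span U x.2
  obtain ⟨y, hy, hyx⟩ := hx
  have : y = x := Subtype.ext hyx
  exact this ▸ hy

/-- Linear maps out of the chain module agree if they agree on the `e_T` generators. -/
lemma mch_ext {q : ℕ} {N : Type*} [AddCommGroup N] [Module ℤ N]
    {f g : Mch k p q →ₗ[ℤ] N}
    (h : ∀ (U : Idx k q) (T : PIdx k p),
      f (DirectSum.lof ℤ (Idx k q) (fun γ => Fp k p γ.1) U (eT U.1 T)) =
      g (DirectSum.lof ℤ (Idx k q) (fun γ => Fp k p γ.1) U (eT U.1 T))) : f = g := by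
  refine DirectSum.linearMap_ext ℤ fun U => ?_
  refine LinearMap.ext_on (eT_span U.1) ?_
  rintro _ ⟨T, rfl⟩
  exact h U T

lemma fp_subsingleton {U : Finset (Fin k)} (h : k - U.card < p) :
    Subsingleton (Fp k p U) := by
  constructor
  intro a b
  have hz : ∀ T : PIdx k p, eTA U T = (0 : ExteriorAlgebra ℤ (Latt k U)) := by
    intro T
    have : ¬ T.1 ⊆ Uᶜ := by
      intro hsub
      have := Finset.card_le_card hsub
      rw [T.2, Finset.card_compl, Fintype.card_fin] at this
      omega
    obtain ⟨i, hiT, hiU⟩ := Finset.not_subset.1 this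
    rw [Finset.mem_compl, not_not] at hiU
    have := eT_eq_zero (U := U) hiT hiU
    exact congrArg Subtype.val this
  have hle : ⋀[ℤ]^p (Latt k U) ≤ ⊥ := by
    refine le_trans (exterior_le_span U) ?_
    refine Submodule.span_le.2 ?_
    rintro _ ⟨T, rfl⟩
    simp [hz T]
  have ha : (a : ExteriorAlgebra ℤ (Latt k U)) = 0 := by simpa using hle a.2
  have hb : (b : ExteriorAlgebra ℤ (Latt k U)) = 0 := by simpa using hle b.2
  exact Subtype.ext (ha.trans hb.symm)

lemma mch_subsingleton {q : ℕ} (h : ∀ U : Idx k q, Subsingleton (Fp k p U.1)) :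
    Subsingleton (Mch k p q) := by
  constructor
  intro a b
  refine DFinsupp.ext fun U => ?_
  exact @Subsingleton.elim _ (h U) _ _

lemma mch_subsingleton_of_isEmpty {q : ℕ} (h : IsEmpty (Idx k q)) :
    Subsingleton (Mch k p q) := by
  constructor
  intro a b
  refine DFinsupp.ext fun U => h.elim U

lemma dual_subsingleton {M : Type*} [AddCommGroup M] [Module ℤ M] (h : Subsingleton M) :
    Subsingleton (Module.Dual ℤ M) := by
  constructor
  intro f g
  ext x
  rw [show x = 0 from Subsingleton.elim x 0]
  simp

lemma idx_empty {q : ℕ} (h : k < q) : IsEmpty (Idx k q) := by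
  constructor
  intro U
  have := U.2
  omega

lemma idx_zero_eq (U : Idx k 0) : U.1 = Finset.univ := by
  have := U.2
  exact Finset.eq_univ_of_card _ (by rw [Fintype.card_fin]; omega)

end TropAux
namespace TropAux
open TropAffine ExteriorAlgebra

variable {k p : ℕ}

lemma compl_nonempty (hp : p < k) (T : PIdx k p) : T.1ᶜ.Nonempty := by
  rw [← Finset.card_pos, Finset.card_compl, T.2, Fintype.card_fin]
  omega

/-- a chosen vertex outside `T`. -/
noncomputable def vT (hp : p < k) (T : PIdx k p) : Fin k := T.1ᶜ.min' (compl_nonempty hp T)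

lemma vT_not_mem (hp : p < k) (T : PIdx k p) : vT hp T ∉ T.1 := by
  have := Finset.min'_mem T.1ᶜ (compl_nonempty hp T)
  rwa [Finset.mem_compl] at this

lemma erase_card {q : ℕ} (U : Idx k q) {v : Fin k} (hv : v ∈ U.1) :
    (U.1.erase v).card + (q + 1) = k := by
  rw [Finset.card_erase_of_mem hv]
  have h1 := U.2
  have h2 : U.1.card ≠ 0 := Finset.card_ne_zero_of_mem hv
  omega

lemma insert_card {q : ℕ} (U : Idx k (q + 1)) {v : Fin k} (hv : v ∉ U.1) :
    (insert v U.1).card + q = k := by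
  rw [Finset.card_insert_of_notMem hv]
  have := U.2
  omega

/-- value of the contracting homotopy on the generator `(U, e_T)`. -/
noncomputable def mT (cd : CubeData k p) (hp : p < k) (q : ℕ) (U : Idx k q) (T : PIdx k p) :
    Mch k p (q + 1) :=
  if h : vT hp T ∈ U.1 then
    cd.ε q U ⟨U.1.erase (vT hp T), erase_card U h⟩ •
      DirectSum.lof ℤ (Idx k (q + 1)) (fun γ => Fp k p γ.1)
        ⟨U.1.erase (vT hp T), erase_card U h⟩ (eT (U.1.erase (vT hp T)) T)
  else 0

/-- the contracting homotopy. -/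
noncomputable def sMap (cd : CubeData k p) (hp : p < k) (q : ℕ) :
    Mch k p q →ₗ[ℤ] Mch k p (q + 1) :=
  DirectSum.toModule ℤ _ _ fun U =>
    (liftAlternating (N := Mch k p (q + 1)) (Function.update 0 p
      (∑ T : PIdx k p,
        (LinearMap.toSpanSingleton ℤ _ (mT cd hp q U T)).compAlternatingMap (dT U.1 T)))) ∘ₗ
      (Submodule.subtype _)

lemma sMap_eT (cd : CubeData k p) (hp : p < k) (q : ℕ) (U : Idx k q) (S : PIdx k p) :
    sMap cd hp q (DirectSum.lof ℤ (Idx k q) (fun γ => Fp k p γ.1) U (eT U.1 S)) =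
      if ∀ i ∈ S.1, i ∉ U.1 then mT cd hp q U S else 0 := by
  rw [sMap, DirectSum.toModule_lof, LinearMap.comp_apply, Submodule.subtype_apply]
  show liftAlternating _ (ιMulti ℤ p (fam U.1 S)) = _
  rw [liftAlternating_apply_ιMulti, Function.update_self, altsum_apply (N := Mch k p (q + 1))]
  rw [Finset.sum_eq_single_of_mem S (Finset.mem_univ S) (fun T _ hT => by
    rw [LinearMap.compAlternatingMap_apply, dT_fam,
      if_neg (fun hc => hT hc.1.symm), LinearMap.toSpanSingleton_apply, zero_smul])]
  rw [LinearMap.compAlternatingMap_apply, dT_fam, LinearMap.toSpanSingleton_apply]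
  by_cases hd : ∀ i ∈ S.1, i ∉ U.1
  · rw [if_pos ⟨rfl, hd⟩, if_pos hd, one_smul]
  · rw [if_neg (fun hc => hd hc.2), if_neg hd, zero_smul]

lemma imap_eT (cd : CubeData k p) {q : ℕ} (γ : Idx k q) (δ : Idx k (q + 1))
    (h : δ.1 ⊆ γ.1) (T : PIdx k p) :
    cd.imap γ δ h (eT δ.1 T) = eT γ.1 T := by
  refine Subtype.ext ?_
  rw [cd.imap_spec γ δ h]
  show (ExteriorAlgebra.map (projL k h)) (eTA δ.1 T) = eTA γ.1 T
  rw [eTA, eTA, map_apply_ιMulti]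
  congr 1

lemma bdry_eT (cd : CubeData k p) (q : ℕ) (δ : Idx k (q + 1)) (T : PIdx k p) :
    bdry cd q (DirectSum.lof ℤ (Idx k (q + 1)) (fun γ => Fp k p γ.1) δ (eT δ.1 T)) =
      ∑ γ : Idx k q, if h : δ.1 ⊆ γ.1 then
        cd.ε q γ δ • DirectSum.lof ℤ (Idx k q) (fun γ' => Fp k p γ'.1) γ (eT γ.1 T)
      else 0 := by
  rw [bdry, DirectSum.toModule_lof, LinearMap.sum_apply]
  refine Finset.sum_congr rfl fun γ _ => ?_
  by_cases h : δ.1 ⊆ γ.1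
  · rw [dif_pos h, dif_pos h, LinearMap.smul_apply, LinearMap.comp_apply, imap_eT]
  · rw [dif_neg h, dif_neg h, LinearMap.zero_apply]

end TropAux
namespace TropAux
open TropAffine ExteriorAlgebra

variable {k p : ℕ}

lemma eps_sq (cd : CubeData k p) {q : ℕ} (γ : Idx k q) (δ : Idx k (q + 1))
    (h : δ.1 ⊆ γ.1) : cd.ε q γ δ * cd.ε q γ δ = 1 := by
  rcases cd.ε_unit q γ δ h with h1 | h1 <;> rw [h1] <;> norm_num

lemma homotopy0 (cd : CubeData k p) (hp : p < k) :
    (bdry cd 0) ∘ₗ (sMap cd hp 0) = LinearMap.id := by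
  apply mch_ext (N := Mch k p 0)
  intro U S
  rw [LinearMap.comp_apply, LinearMap.id_apply]
  by_cases hd : ∀ i ∈ S.1, i ∉ U.1
  · rw [sMap_eT, if_pos hd]
    have hvU : vT hp S ∈ U.1 := by rw [idx_zero_eq U]; exact Finset.mem_univ _
    rw [mT, dif_pos hvU, map_smul]
    erw [bdry_eT]
    have hU : ∀ γ : Idx k 0, γ = U := fun γ =>
      Subtype.ext ((idx_zero_eq γ).trans (idx_zero_eq U).symm)
    rw [Finset.sum_eq_single_of_mem U (Finset.mem_univ U)
      (fun γ _ hγ => absurd (hU γ) hγ)]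
    erw [dif_pos (Finset.erase_subset _ _), smul_smul, eps_sq, one_smul]
    exact Finset.erase_subset _ _
  · push_neg at hd
    obtain ⟨i, hiS, hiU⟩ := hd
    rw [eT_eq_zero hiS hiU]
    simp

/-- the sign identity coming from `∂ ∘ ∂ = 0` on a square of faces. -/
lemma diamond (cd : CubeData k p) (q : ℕ) (U γ : Idx k (q + 1)) {v : Fin k}
    (hvU : v ∈ U.1) (hvγ : v ∉ γ.1) (hsub : U.1.erase v ⊆ γ.1) :
    cd.ε (q + 1) U ⟨U.1.erase v, erase_card U hvU⟩ *
        cd.ε (q + 1) γ ⟨U.1.erase v, erase_card U hvU⟩ +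
      cd.ε q ⟨insert v γ.1, insert_card γ hvγ⟩ U *
        cd.ε q ⟨insert v γ.1, insert_card γ hvγ⟩ γ = 0 := by
  set U' : Idx k (q + 2) := ⟨U.1.erase v, erase_card U hvU⟩ with hU'
  set β : Idx k q := ⟨insert v γ.1, insert_card γ hvγ⟩ with hβ
  have hUβ : U.1 ⊆ β.1 := by
    intro i hi
    by_cases hiv : i = v
    · subst hiv; exact Finset.mem_insert_self _ _
    · exact Finset.mem_insert_of_mem (hsub (Finset.mem_erase.2 ⟨hiv, hi⟩))
  have hγβ : γ.1 ⊆ β.1 := Finset.subset_insert _ _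
  have hU'U : U'.1 ⊆ U.1 := Finset.erase_subset _ _
  have hUγ : U ≠ γ := fun h => hvγ (h ▸ hvU)
  have hrel := cd.ε_rel q β U'
  rw [Finset.sum_eq_add_of_mem U γ (Finset.mem_univ U) (Finset.mem_univ γ) hUγ ?_] at hrel
  · rcases cd.ε_unit q β U hUβ with ha | ha <;>
      rcases cd.ε_unit (q + 1) U U' hU'U with hb | hb <;>
      rcases cd.ε_unit q β γ hγβ with hc | hc <;>
      rcases cd.ε_unit (q + 1) γ U' hsub with hd1 | hd1 <;>
      rw [ha, hb, hc, hd1] at hrel ⊢ <;> omega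
  · intro μ _ hμ
    by_cases hm1 : μ.1 ⊆ β.1
    · by_cases hm2 : U'.1 ⊆ μ.1
      · exfalso
        by_cases hv : v ∈ μ.1
        · apply hμ.1
          refine Subtype.ext ?_
          have hUμ : U.1 ⊆ μ.1 := by
            intro i hi
            by_cases hiv : i = v
            · subst hiv; exact hv
            · exact hm2 (Finset.mem_erase.2 ⟨hiv, hi⟩)
          exact (Finset.eq_of_subset_of_card_le hUμ (by have h1 := μ.2; have h2 := U.2; omega)).symm
        · apply hμ.2
          refine Subtype.ext ?_
          have hμγ : μ.1 ⊆ γ.1 := by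
            have := (Finset.subset_erase).2 ⟨hm1, hv⟩
            rwa [hβ, Finset.erase_insert hvγ] at this
          exact Finset.eq_of_subset_of_card_le hμγ (by have h1 := μ.2; have h2 := γ.2; omega)
      · rw [cd.ε_zero (q + 1) μ U' hm2, mul_zero]
    · rw [cd.ε_zero q β μ hm1, zero_mul]
end TropAux
namespace TropAux
open TropAffine ExteriorAlgebra

variable {k p : ℕ}

set_option maxHeartbeats 2000000 in
lemma homotopyS (cd : CubeData k p) (hp : p < k) (q : ℕ) :
    (bdry cd (q + 1)) ∘ₗ (sMap cd hp (q + 1)) + (sMap cd hp q) ∘ₗ (bdry cd q) =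
      LinearMap.id := by
  apply mch_ext (N := Mch k p (q + 1))
  intro U S
  rw [LinearMap.add_apply, LinearMap.comp_apply, LinearMap.comp_apply, LinearMap.id_apply]
  by_cases hd : ∀ i ∈ S.1, i ∉ U.1
  swap
  · push_neg at hd
    obtain ⟨i, hiS, hiU⟩ := hd
    rw [eT_eq_zero hiS hiU]
    simp
  rw [sMap_eT, if_pos hd, bdry_eT cd q U S, map_sum]
  have hvS : vT hp S ∉ S.1 := vT_not_mem hp S
  set v := vT hp S with hv
  have hsum2 : ∀ β : Idx k q,
      sMap cd hp q (if h : U.1 ⊆ β.1 then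
          cd.ε q β U • DirectSum.lof ℤ (Idx k q) (fun γ' => Fp k p γ'.1) β (eT β.1 S) else 0)
        = if h : U.1 ⊆ β.1 then
            cd.ε q β U • (if ∀ i ∈ S.1, i ∉ β.1 then mT cd hp q β S else 0) else 0 := by
    intro β
    by_cases h : U.1 ⊆ β.1
    · rw [dif_pos h, dif_pos h, map_smul, sMap_eT]
    · rw [dif_neg h, dif_neg h, map_zero]
  rw [Finset.sum_congr rfl fun β _ => hsum2 β]
  by_cases hvU : v ∈ U.1
  · -- the vertex is at infinity in the face `U`
    rw [mT, dif_pos hvU, map_smul,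
      bdry_eT cd (q + 1) ⟨U.1.erase v, erase_card U hvU⟩ S, Finset.smul_sum]
    set U' : Idx k (q + 2) := ⟨U.1.erase v, erase_card U hvU⟩ with hU'
    set X := DirectSum.lof ℤ (Idx k (q + 1)) (fun γ' => Fp k p γ'.1) U (eT U.1 S) with hX
    set f : Idx k (q + 1) → Mch k p (q + 1) := fun γ =>
      cd.ε (q + 1) U U' • (if h : U'.1 ⊆ γ.1 then
        cd.ε (q + 1) γ U' •
          DirectSum.lof ℤ (Idx k (q + 1)) (fun γ' => Fp k p γ'.1) γ (eT γ.1 S)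
      else 0) with hf
    set g : Idx k q → Mch k p (q + 1) := fun β =>
      if h : U.1 ⊆ β.1 then cd.ε q β U •
        (if ∀ i ∈ S.1, i ∉ β.1 then mT cd hp q β S else 0) else 0 with hg
    set s₂ : Finset (Idx k (q + 1)) := (Finset.univ.erase U).filter
      (fun γ => U'.1 ⊆ γ.1 ∧ ∀ i ∈ S.1, i ∉ γ.1) with hs₂
    have hA : ∑ γ : Idx k (q + 1), f γ = X + ∑ γ ∈ s₂, f γ := by
      rw [← Finset.add_sum_erase _ f (Finset.mem_univ U)]
      congr 1
      · rw [hf]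
        simp only
        rw [dif_pos (Finset.erase_subset _ _), smul_smul,
          eps_sq cd U U' (Finset.erase_subset _ _), one_smul]
      · rw [hs₂]
        refine (Finset.sum_filter_of_ne ?_).symm
        intro γ hγ hfγ
        constructor
        · by_contra hc
          exact hfγ (by rw [hf]; simp only; rw [dif_neg hc, smul_zero])
        · by_contra hc
          push_neg at hc
          obtain ⟨i, hiS, hiγ⟩ := hc
          refine hfγ ?_
          rw [hf]
          simp only
          rw [eT_eq_zero hiS hiγ]
          by_cases hsub : U'.1 ⊆ γ.1
          · rw [dif_pos hsub]; simp
          · rw [dif_neg hsub]; simp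
    have hB : ∑ β : Idx k q, g β = ∑ γ ∈ s₂, (-f γ) := by
      rw [show (∑ β : Idx k q, g β) = ∑ β ∈ Finset.univ.filter
          (fun β : Idx k q => U.1 ⊆ β.1 ∧ ∀ i ∈ S.1, i ∉ β.1), g β from
        (Finset.sum_filter_of_ne (by
          intro β _ hgβ
          constructor
          · by_contra hc
            exact hgβ (by rw [hg]; simp only; rw [dif_neg hc])
          · by_contra hc
            refine hgβ ?_
            rw [hg]
            simp only
            by_cases h1 : U.1 ⊆ β.1
            · rw [dif_pos h1, if_neg hc, smul_zero]
            · rw [dif_neg h1])).symm]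
      refine Finset.sum_bij (fun β hβ => (⟨β.1.erase v,
        erase_card β ((Finset.mem_filter.1 hβ).2.1 hvU)⟩ : Idx k (q + 1))) ?_ ?_ ?_ ?_
      · -- maps into s₂
        intro β hβ
        obtain ⟨-, hUβ, hdβ⟩ := Finset.mem_filter.1 hβ
        rw [hs₂]
        refine Finset.mem_filter.2 ?_
        erw [Finset.mem_erase]
        refine ⟨⟨?_, Finset.mem_univ _⟩, ?_, ?_⟩
        · intro hc
          have hval : β.1.erase v = U.1 := congrArg Subtype.val hc
          rw [← hval] at hvU
          exact Finset.notMem_erase _ _ hvU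
        · exact Finset.erase_subset_erase v hUβ
        · intro i hiS hie
          exact hdβ i hiS (Finset.mem_of_mem_erase hie)
      · -- injective
        intro β₁ hβ₁ β₂ hβ₂ hss
        obtain ⟨-, hUβ₁, -⟩ := Finset.mem_filter.1 hβ₁
        obtain ⟨-, hUβ₂, -⟩ := Finset.mem_filter.1 hβ₂
        have h1 := congrArg Subtype.val hss
        refine Subtype.ext ?_
        rw [← Finset.insert_erase (hUβ₁ hvU), ← Finset.insert_erase (hUβ₂ hvU)]
        rw [show (β₁.1.erase v) = (β₂.1.erase v) from h1]
      · -- surjective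
        intro γ hγ
        rw [hs₂, Finset.mem_filter, Finset.mem_erase] at hγ
        obtain ⟨⟨hγU, -⟩, hsubγ, hdγ⟩ := hγ
        have hvγ : v ∉ γ.1 := by
          intro hc
          apply hγU
          refine Subtype.ext ?_
          have hUγ : U.1 ⊆ γ.1 := by
            intro i hi
            by_cases hiv : i = v
            · subst hiv; exact hc
            · exact hsubγ (Finset.mem_erase.2 ⟨hiv, hi⟩)
          exact (Finset.eq_of_subset_of_card_le hUγ
            (by have h1 := γ.2; have h2 := U.2; omega)).symm
        refine ⟨⟨insert v γ.1, insert_card γ hvγ⟩, ?_, ?_⟩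
        · refine Finset.mem_filter.2 ?_
          refine ⟨Finset.mem_univ _, ?_, ?_⟩
          · intro i hi
            by_cases hiv : i = v
            · subst hiv; exact Finset.mem_insert_self _ _
            · exact Finset.mem_insert_of_mem (hsubγ (Finset.mem_erase.2 ⟨hiv, hi⟩))
          · intro i hiS
            rw [Finset.mem_insert]
            push_neg
            exact ⟨fun hc => hvS (hc ▸ hiS), hdγ i hiS⟩
        · exact Subtype.ext (Finset.erase_insert hvγ)
      · -- values
        intro β hβ
        obtain ⟨-, hUβ, hdβ⟩ := Finset.mem_filter.1 hβ
        have hvβ : v ∈ β.1 := hUβ hvU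
        set γ : Idx k (q + 1) := ⟨β.1.erase v, erase_card β hvβ⟩ with hγ
        have hvγ : v ∉ γ.1 := Finset.notMem_erase _ _
        have hsubγ : U'.1 ⊆ γ.1 := Finset.erase_subset_erase v hUβ
        have hins : (⟨insert v γ.1, insert_card γ hvγ⟩ : Idx k q) = β :=
          Subtype.ext (Finset.insert_erase hvβ)
        have hdia := diamond cd q U γ hvU hvγ hsubγ
        rw [hins] at hdia
        rw [← hU'] at hdia
        rw [hg, hf]
        simp only
        rw [dif_pos hUβ, if_pos hdβ, mT, dif_pos hvβ, dif_pos hsubγ]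
        show cd.ε q β U • cd.ε q β γ •
            (DirectSum.lof ℤ (Idx k (q + 1)) (fun γ' => Fp k p γ'.1) γ) (eT γ.1 S)
          = -(cd.ε (q + 1) U U' • cd.ε (q + 1) γ U' •
            (DirectSum.lof ℤ (Idx k (q + 1)) (fun γ' => Fp k p γ'.1) γ) (eT γ.1 S))
        rw [smul_smul, smul_smul, show cd.ε q β U * cd.ε q β γ =
          -(cd.ε (q + 1) U U' * cd.ε (q + 1) γ U') by omega]
        exact neg_smul (M := Mch k p (q + 1)) _ _
    rw [hA, hB, add_assoc, ← Finset.sum_add_distrib]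
    simp
  · -- the vertex is free in the face `U`
    rw [mT, dif_neg hvU, map_zero, zero_add]
    set β₀ : Idx k q := ⟨insert v U.1, insert_card U hvU⟩ with hβ₀
    have hzero : ∀ β ∈ Finset.univ, β ≠ β₀ →
        (if h : U.1 ⊆ β.1 then cd.ε q β U •
          (if ∀ i ∈ S.1, i ∉ β.1 then mT cd hp q β S else 0) else 0) = 0 := by
      intro β _ hβ
      by_cases h1 : U.1 ⊆ β.1
      · rw [dif_pos h1]
        by_cases h2 : ∀ i ∈ S.1, i ∉ β.1
        · rw [if_pos h2, mT]
          rw [dif_neg ?hvb]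
          · simp
          case hvb =>
            intro hvβ
            apply hβ
            refine Subtype.ext ?_
            have hsub : β₀.1 ⊆ β.1 := Finset.insert_subset_iff.2 ⟨hvβ, h1⟩
            exact (Finset.eq_of_subset_of_card_le hsub
              (by have := β.2; have := β₀.2; omega)).symm
        · rw [if_neg h2, smul_zero]
      · rw [dif_neg h1]
    rw [Finset.sum_eq_single_of_mem β₀ (Finset.mem_univ _) hzero]
    rw [dif_pos (Finset.subset_insert _ _), if_pos ?disj, mT,
      dif_pos (Finset.mem_insert_self v U.1)]
    case disj =>
      intro i hiS
      rw [Finset.mem_insert]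
      push_neg
      exact ⟨fun hc => hvS (hc ▸ hiS), hd i hiS⟩
    have hUerase : (⟨β₀.1.erase v,
        erase_card β₀ (Finset.mem_insert_self v U.1)⟩ : Idx k (q + 1)) = U :=
      Subtype.ext (Finset.erase_insert hvU)
    simp only [← hv]
    rw [show cd.ε q β₀ ⟨β₀.1.erase v, erase_card β₀ (Finset.mem_insert_self v U.1)⟩ =
      cd.ε q β₀ U from congrArg (cd.ε q β₀) hUerase]
    rw [show (DirectSum.lof ℤ (Idx k (q + 1)) (fun γ => Fp k p γ.1)
        ⟨β₀.1.erase v, erase_card β₀ (Finset.mem_insert_self v U.1)⟩)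
        (eT (β₀.1.erase v) S)
        = (DirectSum.lof ℤ (Idx k (q + 1)) (fun γ => Fp k p γ.1) U) (eT U.1 S) from
      congrArg (fun δ : Idx k (q + 1) =>
        (DirectSum.lof ℤ (Idx k (q + 1)) (fun γ => Fp k p γ.1) δ) (eT δ.1 S)) hUerase]
    rw [smul_smul, eps_sq cd β₀ U (Finset.subset_insert _ _), one_smul]
end TropAux
namespace TropAux
open TropAffine ExteriorAlgebra

variable {k p : ℕ}

lemma hc_subsingleton_of_cc (cd : CubeData k p) (q : ℕ)
    (h : Subsingleton (Cc (k := k) p q)) : Subsingleton (Hc cd q) := by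
  have hsub : Subsingleton (↥(LinearMap.ker (coder cd q))) := by
    constructor; intro a b; exact Subtype.ext (Subsingleton.elim _ _)
  show Subsingleton ((↥(LinearMap.ker (coder cd q))) ⧸
    Submodule.comap (LinearMap.ker (coder cd q)).subtype
      (LinearMap.range (coderFrom cd q)))
  rw [Submodule.Quotient.subsingleton_iff]
  refine eq_top_iff.2 fun x _ => ?_
  rw [show x = 0 from Subsingleton.elim x 0]
  exact Submodule.zero_mem _

lemma cc_subsingleton_of_mch (q : ℕ) (h : Subsingleton (Mch k p q)) :
    Subsingleton (Cc (k := k) p q) := dual_subsingleton h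

set_option maxHeartbeats 2000000 in
/-- Case B: `p < k` gives vanishing in all degrees, via the contracting homotopy. -/
lemma hc_subsingleton_B (cd : CubeData k p) (hp : p < k) (q : ℕ) :
    Subsingleton (Hc cd q) := by
  show Subsingleton ((↥(LinearMap.ker (coder cd q))) ⧸
    Submodule.comap (LinearMap.ker (coder cd q)).subtype
      (LinearMap.range (coderFrom cd q)))
  rw [Submodule.Quotient.subsingleton_iff]
  refine eq_top_iff.2 fun φ _ => Submodule.mem_comap.2 ?_
  have hker : coder cd q φ.1 = 0 := LinearMap.mem_ker.1 φ.2
  match q with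
  | 0 =>
    have hzero : (φ : Cc (k := k) p 0) = 0 := by
      refine LinearMap.ext fun x => ?_
      have h1 : x = (bdry cd 0) (sMap cd hp 0 x) := by
        conv_lhs => rw [← LinearMap.id_apply (R := ℤ) x, ← homotopy0 cd hp]
        rfl
      rw [LinearMap.zero_apply, h1]
      have : (φ : Cc (k := k) p 0) ((bdry cd 0) (sMap cd hp 0 x)) =
          (coder cd 0 φ.1) (sMap cd hp 0 x) := rfl
      rw [this, hker, LinearMap.zero_apply]
    rw [show (LinearMap.ker (coder cd 0)).subtype φ = φ.1 from rfl, hzero]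
    exact Submodule.zero_mem _
  | (q' + 1) =>
    refine ⟨(sMap cd hp q').dualMap φ.1, ?_⟩
    show (bdry cd q').dualMap ((sMap cd hp q').dualMap φ.1) = φ.1
    refine LinearMap.ext fun x => ?_
    have h1 : (bdry cd (q' + 1)) (sMap cd hp (q' + 1) x) +
        (sMap cd hp q') (bdry cd q' x) = x := by
      conv_rhs => rw [← LinearMap.id_apply (R := ℤ) x, ← homotopyS cd hp q']
      rfl
    have h2 : (φ : Cc (k := k) p (q' + 1)) ((bdry cd (q' + 1)) (sMap cd hp (q' + 1) x)) =
        (coder cd (q' + 1) φ.1) (sMap cd hp (q' + 1) x) := rfl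
    calc (bdry cd q').dualMap ((sMap cd hp q').dualMap φ.1) x
        = φ.1 ((sMap cd hp q') (bdry cd q' x)) := rfl
      _ = φ.1 ((bdry cd (q' + 1)) (sMap cd hp (q' + 1) x)) +
            φ.1 ((sMap cd hp q') (bdry cd q' x)) := by
          rw [h2, hker, LinearMap.zero_apply, zero_add]
      _ = φ.1 x := by rw [← map_add, h1]

/-- the top exterior power over the empty `U` is free of rank one. -/
noncomputable def fpTopEquiv (hk : 1 ≤ k) : ℤ ≃ₗ[ℤ] Fp k k (∅ : Finset (Fin k)) := by
  have hT : (Finset.univ : Finset (Fin k)).card = k := by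
    rw [Finset.card_univ, Fintype.card_fin]
  refine LinearEquiv.ofLinear
    (LinearMap.toSpanSingleton ℤ _ (eT (∅ : Finset (Fin k)) ⟨Finset.univ, hT⟩))
    ((liftAlternating (Function.update 0 k (dT (∅ : Finset (Fin k)) ⟨Finset.univ, hT⟩))) ∘ₗ
      (Submodule.subtype _)) ?_ ?_
  · -- toSpanSingleton ∘ φ = id on Fp
    refine LinearMap.ext_on (eT_span (∅ : Finset (Fin k))) ?_
    rintro _ ⟨T, rfl⟩
    have hTT : T = ⟨Finset.univ, hT⟩ := Subtype.ext
      (Finset.eq_univ_of_card _ (by rw [T.2, Fintype.card_fin]))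
    subst hTT
    rw [LinearMap.comp_apply, LinearMap.comp_apply, LinearMap.id_apply]
    rw [show ((Submodule.subtype _) (eT (∅ : Finset (Fin k)) ⟨Finset.univ, hT⟩)) =
      ιMulti ℤ k (fam (∅ : Finset (Fin k)) ⟨Finset.univ, hT⟩) from rfl]
    rw [liftAlternating_apply_ιMulti, Function.update_self, dT_fam]
    rw [if_pos ⟨rfl, fun i _ => Finset.notMem_empty i⟩, LinearMap.toSpanSingleton_apply,
      one_smul]
  · -- φ ∘ toSpanSingleton = id on ℤ
    ext
    rw [LinearMap.comp_apply, LinearMap.comp_apply, LinearMap.toSpanSingleton_apply,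
      one_smul, LinearMap.id_apply]
    rw [show ((Submodule.subtype _) (eT (∅ : Finset (Fin k)) ⟨Finset.univ, hT⟩)) =
      ιMulti ℤ k (fam (∅ : Finset (Fin k)) ⟨Finset.univ, hT⟩) from rfl]
    rw [liftAlternating_apply_ιMulti, Function.update_self, dT_fam]
    rw [if_pos ⟨rfl, fun i _ => Finset.notMem_empty i⟩]

instance idx_top_unique : Unique (Idx k k) where
  default := ⟨∅, by simp⟩
  uniq := fun U => Subtype.ext (Finset.card_eq_zero.1 (by have := U.2; omega))

/-- `Mch k k k` is the single exterior power at `U = ∅`. -/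
noncomputable def mchTopEquiv : Mch k k k ≃ₗ[ℤ] Fp k k ((default : Idx k k)).1 := by
  refine LinearEquiv.ofLinear
    (DirectSum.component ℤ (Idx k k) (fun U => Fp k k U.1) default)
    (DirectSum.lof ℤ (Idx k k) (fun U => Fp k k U.1) default) ?_ ?_
  · refine LinearMap.ext fun x => ?_
    rw [LinearMap.comp_apply, LinearMap.id_apply, DirectSum.component.lof_self]
  · refine DirectSum.linearMap_ext ℤ fun U => ?_
    rw [Unique.eq_default U]
    ext x
    simp only [LinearMap.comp_apply, DirectSum.component.lof_self, LinearMap.id_apply]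
end TropAux
/-- for `k ≥ 1`, the tropical cohomology with compact support
`H_c^{p,q}(𝕋^k)` of tropical affine space vanishes for `(p,q) ≠ (k,k)`, and
`H_c^{k,k}(𝕋^k) ≅ ℤ`. -/
theorem compact_support_cohomology_Tk (k : ℕ) (hk : 1 ≤ k) :
    (∀ (p q : ℕ) (cd : CubeData k p), (p, q) ≠ (k, k) →
      Subsingleton (TropAffine.Hc cd q)) ∧
    (∀ cd : CubeData k k, Nonempty (TropAffine.Hc cd k ≃ₗ[ℤ] ℤ)) := by
  constructor
  · intro p q cd hne
    by_cases hp : p < k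
    · exact TropAux.hc_subsingleton_B cd hp q
    · push_neg at hp
      rcases lt_or_eq_of_le hp with hp' | hp'
      · -- `k < p` : all coefficient modules vanish
        refine TropAux.hc_subsingleton_of_cc cd q (TropAux.cc_subsingleton_of_mch q ?_)
        refine TropAux.mch_subsingleton fun U => TropAux.fp_subsingleton ?_
        omega
      · -- `p = k`, so `q ≠ k`
        subst hp'
        have hq : q ≠ k := fun h => hne (by rw [h])
        rcases lt_or_gt_of_ne hq with h | h
        · refine TropAux.hc_subsingleton_of_cc cd q (TropAux.cc_subsingleton_of_mch q ?_)
          refine TropAux.mch_subsingleton fun U => TropAux.fp_subsingleton ?_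
          have := U.2; omega
        · refine TropAux.hc_subsingleton_of_cc cd q (TropAux.cc_subsingleton_of_mch q ?_)
          exact TropAux.mch_subsingleton_of_isEmpty (TropAux.idx_empty h)
  · intro cd
    have hker : LinearMap.ker (TropAffine.coder cd k) = ⊤ := by
      have hcc : Subsingleton (TropAffine.Cc (k := k) k (k + 1)) :=
        TropAux.cc_subsingleton_of_mch _
          (TropAux.mch_subsingleton_of_isEmpty (TropAux.idx_empty (by omega)))
      exact eq_top_iff.2 fun x _ => LinearMap.mem_ker.2 (Subsingleton.elim _ _)
    have hrange : LinearMap.range (TropAffine.coderFrom cd k) = ⊥ := by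
      obtain ⟨m, rfl⟩ : ∃ m, k = m + 1 := ⟨k - 1, by omega⟩
      have hdom : Subsingleton (TropAffine.Cc (k := m + 1) (m + 1) (m + 1 - 1)) := by
        refine TropAux.cc_subsingleton_of_mch _
          (TropAux.mch_subsingleton fun U => TropAux.fp_subsingleton ?_)
        have := U.2; omega
      refine (Submodule.eq_bot_iff _).2 ?_
      rintro x ⟨y, rfl⟩
      rw [show y = 0 from Subsingleton.elim y 0, map_zero]
    have hcomap : Submodule.comap (LinearMap.ker (TropAffine.coder cd k)).subtype
        (LinearMap.range (TropAffine.coderFrom cd k)) = ⊥ := by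
      rw [hrange, Submodule.comap_bot, Submodule.ker_subtype]
    have E : TropAffine.Mch k k k ≃ₗ[ℤ] ℤ :=
      (TropAux.mchTopEquiv).trans (TropAux.fpTopEquiv hk).symm
    exact ⟨(Submodule.quotEquivOfEqBot _ hcomap).trans
      ((LinearEquiv.ofTop _ hker).trans
        ((E.symm.dualMap).trans (LinearMap.ringLmapEquivSelf ℤ ℤ ℤ)))⟩
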